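/- Let r_G, r_T, μ_G, μ_T > 0, γ_TG ∈ ℝ, Y_T = r_T/μ_T, T₀ > 0 and G₀ > 0. Let T(t) = T₀·e^{r_T·t}/(1 + (T₀/Y_T)·(e^{r_T·t} − 1)) be the logistic tree solution, and define m(t) = r_G·t − (γ_TG/μ_T)·ln(1 + (T₀/Y_T)·(e^{r_T·t} − 1)) and χ(t) = e^{m(t)}. Then the function G(t) = χ(t)·G₀ / (1 + μ_G·G₀·∫₀^t χ(u) du) satisfies G(0) = G₀, G(t) > 0, and G'(t) = (r_G − γ_TG·T(t))·G(t) − μ_G·G(t)² for all t ≥ 0; i.e., it is the explicit solution of the grass equation coupled to the logistic tree biomass. -/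

import Mathlib

/-- Explicit solution of the grass equation coupled to the logistic
tree biomass, via the integrating factor `χ`. -/
theorem grass_explicit_solution_coupled
    (rG rT μG μT γTG YT T₀ G₀ : ℝ)
    (hrG : 0 < rG) (hrT : 0 < rT) (hμG : 0 < μG) (hμT : 0 < μT)
    (hYT : YT = rT / μT) (hT₀ : 0 < T₀) (hG₀ : 0 < G₀)
    (T m χ G : ℝ → ℝ)
    (hT : T = fun t => T₀ * Real.exp (rT * t) / (1 + (T₀ / YT) * (Real.exp (rT * t) - 1)))
    (hm : m = fun t => rG * t - (γTG / μT) *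
      Real.log (1 + (T₀ / YT) * (Real.exp (rT * t) - 1)))
    (hχ : χ = fun t => Real.exp (m t))
    (hG : G = fun t => χ t * G₀ / (1 + μG * G₀ * ∫ u in (0:ℝ)..t, χ u)) :
    G 0 = G₀ ∧ (∀ t ≥ (0:ℝ), 0 < G t) ∧
      ∀ t ≥ (0:ℝ), HasDerivAt G ((rG - γTG * T t) * G t - μG * (G t) ^ 2) t := by
  have hYTpos : 0 < YT := hYT ▸ div_pos hrT hμT
  have hc : 0 < T₀ / YT := div_pos hT₀ hYTpos
  -- D
  set D : ℝ → ℝ := fun t => 1 + (T₀ / YT) * (Real.exp (rT * t) - 1) with hD_def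
  have hDpos : ∀ t : ℝ, 0 ≤ t → 0 < D t := by
    intro t ht
    have h1 : 1 ≤ Real.exp (rT * t) := Real.one_le_exp (by positivity)
    simp only [hD_def]; nlinarith
  set S : Set ℝ := {t | 0 < D t} with hS_def
  have hSopen : IsOpen S := by
    have : Continuous D := by fun_prop
    exact isOpen_lt continuous_const this
  have hSsub : ∀ t : ℝ, 0 ≤ t → t ∈ S := fun t ht => hDpos t ht
  have hχpos : ∀ t, 0 < χ t := by intro t; rw [hχ]; exact Real.exp_pos _
  have hχcont : ContinuousOn χ S := by
    rw [hχ, hm]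
    apply Real.continuous_exp.comp_continuousOn
    apply ContinuousOn.sub (by fun_prop)
    apply ContinuousOn.mul (by fun_prop)
    exact ContinuousOn.log (by fun_prop) (fun t ht => ne_of_gt ht)
  -- derivative of χ
  have hχd : ∀ t : ℝ, 0 ≤ t → HasDerivAt χ ((rG - γTG * T t) * χ t) t := by
    intro t ht
    have hDt : 0 < D t := hDpos t ht
    have hE : HasDerivAt (fun s => Real.exp (rT * s)) (rT * Real.exp (rT * t)) t := by
      have := ((hasDerivAt_id t).const_mul rT).exp
      simpa [mul_comm] using this
    have hDd : HasDerivAt D ((T₀ / YT) * (rT * Real.exp (rT * t))) t := by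
      exact (((hE.sub_const 1).const_mul (T₀ / YT)).const_add 1)
    have hLd : HasDerivAt (fun s => Real.log (D s))
        ((T₀ / YT) * (rT * Real.exp (rT * t)) / D t) t := hDd.log hDt.ne'
    have hmd : HasDerivAt m
        (rG - (γTG / μT) * ((T₀ / YT) * (rT * Real.exp (rT * t)) / D t)) t := by
      rw [hm]
      have h1 : HasDerivAt (fun s : ℝ => rG * s) rG t := by
        simpa using (hasDerivAt_id t).const_mul rG
      exact h1.sub (hLd.const_mul (γTG / μT))
    have := hmd.exp
    rw [hχ]
    convert this using 1
    rw [hT]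
    have hDne : D t ≠ 0 := hDt.ne'
    have h1 : 1 ≤ Real.exp (rT * t) := Real.one_le_exp (by positivity)
    have hkey : T₀ * Real.exp (rT * t) * μT - T₀ * μT + rT ≠ 0 := by nlinarith [mul_nonneg (mul_pos hT₀ hμT).le (sub_nonneg.mpr h1)]
    have hDne2 : (1 + T₀ / (rT / μT) * (Real.exp (rT * t) - 1)) ≠ 0 := by
      rw [← hYT]; exact hDne
    simp only [hD_def, hYT] at *
    have hkey2 : T₀ * Real.exp (rT * t) * μT ^ 2 - T₀ * μT ^ 2 + rT * μT ≠ 0 := by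
      rw [show T₀ * Real.exp (rT * t) * μT ^ 2 - T₀ * μT ^ 2 + rT * μT
          = (T₀ * Real.exp (rT * t) * μT - T₀ * μT + rT) * μT from by ring]
      exact mul_ne_zero hkey hμT.ne'
    field_simp [hkey, hkey2, hμT.ne', hrT.ne']
  -- integral
  set I : ℝ → ℝ := fun t => ∫ u in (0:ℝ)..t, χ u with hI_def
  have hint : ∀ t : ℝ, 0 ≤ t → IntervalIntegrable χ MeasureTheory.volume 0 t := by
    intro t ht
    apply ContinuousOn.intervalIntegrable
    apply hχcont.mono
    rw [Set.uIcc_of_le ht]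
    intro u hu; exact hSsub u hu.1
  have hId : ∀ t : ℝ, 0 ≤ t → HasDerivAt I (χ t) t := by
    intro t ht
    apply intervalIntegral.integral_hasDerivAt_right (hint t ht)
    · exact hχcont.stronglyMeasurableAtFilter hSopen t (hSsub t ht)
    · exact (hχcont t (hSsub t ht)).continuousAt (hSopen.mem_nhds (hSsub t ht))
  have hInn : ∀ t : ℝ, 0 ≤ t → 0 ≤ I t := by
    intro t ht
    apply intervalIntegral.integral_nonneg ht
    intro u _; exact (hχpos u).le
  have hBpos : ∀ t : ℝ, 0 ≤ t → 0 < 1 + μG * G₀ * I t := by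
    intro t ht
    have := hInn t ht
    positivity
  have hI0 : I 0 = 0 := by simp [hI_def]
  refine ⟨?_, ?_, ?_⟩
  · rw [hG]
    simp only
    rw [show (∫ u in (0:ℝ)..(0:ℝ), χ u) = 0 by simp, hχ, hm]
    norm_num
  · intro t ht
    rw [hG]
    have := hBpos t ht
    have := hχpos t
    positivity
  · intro t ht
    have hBne : (1 + μG * G₀ * I t) ≠ 0 := (hBpos t ht).ne'
    have hNum : HasDerivAt (fun s => χ s * G₀) ((rG - γTG * T t) * χ t * G₀) t :=
      (hχd t ht).mul_const G₀
    have hDen : HasDerivAt (fun s => 1 + μG * G₀ * I s) (μG * G₀ * χ t) t :=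
      ((hId t ht).const_mul (μG * G₀)).const_add 1
    have hGd := hNum.div hDen hBne
    rw [hG]
    refine HasDerivAt.congr_deriv hGd ?_
    simp only [hI_def] at hBne ⊢
    field_simp
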